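/- Let p ≡ 1 (mod 3) be a prime and k a positive integer with 3 ∤ k. Then over ℚ_p, the polynomial B(x) = (x² − 2x + 4)³ + p^k factors as a product of exactly two monic irreducible polynomials, each of degree 3, each defining a totally ramified extension of ℚ_p of degree 3 with residue degree 1. -/

import Mathlib

open Polynomial

/-- `g` defines, via any of its roots, a totally ramified extension of `ℚ_p` of degree `e`
with residue degree 1: the field generated by a root has degree `e` over `ℚ_p` and contains
an element whose norm has `p`-adic valuation `1`. -/
def DefinesTotallyRamifiedExt (p : ℕ) [Fact p.Prime] (g : Polynomial ℚ_[p]) (e : ℕ) : Prop :=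
  ∀ (L : Type) [Field L] [Algebra ℚ_[p] L] (θ : L),
    Polynomial.aeval θ g = 0 →
    Algebra.adjoin ℚ_[p] {θ} = ⊤ →
    Module.finrank ℚ_[p] L = e ∧ ∃ x : L, x ≠ 0 ∧ (Algebra.norm ℚ_[p] x).valuation = 1

namespace BFactorsAux

open PadicInt

variable {p : ℕ} [Fact p.Prime]

/-- Hensel lift with prescribed reduction mod p. -/
lemma hensel_lift (F : Polynomial ℤ_[p]) (t : ZMod p)
    (h0 : (F.map (toZMod : ℤ_[p] →+* ZMod p)).eval t = 0)
    (h1 : (F.derivative.map (toZMod : ℤ_[p] →+* ZMod p)).eval t ≠ 0) :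
    ∃ z : ℤ_[p], F.eval z = 0 ∧ toZMod z = t := by
  set a : ℤ_[p] := ((t.val : ℕ) : ℤ_[p]) with ha
  have hta : toZMod a = t := by
    simp [ha, ZMod.natCast_val, ZMod.cast_id]
  have hmap : ∀ G : Polynomial ℤ_[p], toZMod (G.eval a) = (G.map (toZMod : ℤ_[p] →+* ZMod p)).eval t := by
    intro G
    rw [eval_map, ← hta, eval₂_hom]
  have hF0 : ‖F.eval a‖ < 1 := by
    rw [PadicInt.norm_lt_one_iff_dvd, ← Ideal.mem_span_singleton,
      ← PadicInt.maximalIdeal_eq_span_p, ← PadicInt.ker_toZMod, RingHom.mem_ker, hmap, h0]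
  have hF1 : ‖F.derivative.eval a‖ = 1 := by
    have hle := PadicInt.norm_le_one (F.derivative.eval a)
    rcases lt_or_eq_of_le hle with h | h
    · exfalso
      apply h1
      rw [← hmap]
      rw [PadicInt.norm_lt_one_iff_dvd, ← Ideal.mem_span_singleton,
        ← PadicInt.maximalIdeal_eq_span_p, ← PadicInt.ker_toZMod, RingHom.mem_ker] at h
      exact h
    · exact h
  have hnorm : ‖F.eval a‖ < ‖F.derivative.eval a‖ ^ 2 := by rw [hF1]; simpa using hF0
  obtain ⟨z, hz, hza, -⟩ := hensels_lemma hnorm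
  refine ⟨z, hz, ?_⟩
  rw [Polynomial.coe_aeval_eq_eval, hF1] at hza
  have : toZMod (z - a) = 0 := by
    rw [← RingHom.mem_ker, PadicInt.ker_toZMod, PadicInt.maximalIdeal_eq_span_p,
      Ideal.mem_span_singleton, ← PadicInt.norm_lt_one_iff_dvd]
    exact hza
  have := sub_eq_zero.mp (by rwa [map_sub] at this)
  rw [this, hta]

lemma zmod_two_ne (hpmod : p % 3 = 1) : (2 : ZMod p) ≠ 0 := by
  intro h
  have hd : (p : ℕ) ∣ 2 := (ZMod.natCast_eq_zero_iff 2 p).mp (by exact_mod_cast h)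
  have hp2 := (Fact.out : p.Prime).two_le
  rcases Nat.prime_two.eq_one_or_self_of_dvd p hd with h' | h' <;> omega

lemma zmod_three_ne (hpmod : p % 3 = 1) : (3 : ZMod p) ≠ 0 := by
  intro h
  have hd : (p : ℕ) ∣ 3 := (ZMod.natCast_eq_zero_iff 3 p).mp (by exact_mod_cast h)
  have hp2 := (Fact.out : p.Prime).two_le
  rcases Nat.prime_three.eq_one_or_self_of_dvd p hd with h' | h' <;> omega

lemma exists_sqrt_neg_three (hpmod : p % 3 = 1) :
    ∃ t : ZMod p, t ^ 2 = -3 ∧ t ≠ 0 := by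
  have hp : p.Prime := Fact.out
  haveI : Fact (Nat.Prime 3) := ⟨by norm_num⟩
  have hcard : (3 : ℕ) ∣ Nat.card (ZMod p)ˣ := by
    rw [Nat.card_eq_fintype_card, ZMod.card_units_eq_totient, Nat.totient_prime hp]
    omega
  obtain ⟨g, hg⟩ := exists_prime_orderOf_dvd_card' 3 hcard
  set ω : ZMod p := (g : ZMod p) with hω
  have hω3 : ω ^ 3 = 1 := by
    rw [hω, ← Units.val_pow_eq_pow_val, ← hg, pow_orderOf_eq_one, Units.val_one]
  have hω1 : ω ≠ 1 := by
    intro h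
    have : (g : (ZMod p)ˣ) = 1 := Units.ext (by simpa [hω] using h)
    rw [this] at hg
    simp at hg
  have hsum : ω ^ 2 + ω + 1 = 0 := by
    have : (ω - 1) * (ω ^ 2 + ω + 1) = 0 := by ring_nf; linear_combination hω3
    rcases mul_eq_zero.mp this with h | h
    · exact absurd (sub_eq_zero.mp h) hω1
    · exact h
  refine ⟨2 * ω + 1, by linear_combination 4 * hsum, ?_⟩
  intro h
  have h3 : (3 : ZMod p) = 0 := by
    have h2 : (2 * ω + 1) ^ 2 = -3 := by linear_combination 4 * hsum
    rw [h] at h2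
    simpa using h2.symm
  exact zmod_three_ne hpmod h3

lemma factor_identity {R : Type*} [CommRing R] (x a b c e : R)
    (h1 : 2 * b = 9 + a ^ 2) (h2 : b ^ 2 - 2 * a * c = 27) (h3 : c ^ 2 = -(27 + e)) :
    (x ^ 2 - 2 * x + 4) ^ 3 + e =
      (x ^ 3 + (a - 3) * x ^ 2 + (3 - 2 * a + b) * x + (a - b + c - 1)) *
      (x ^ 3 + (-a - 3) * x ^ 2 + (3 + 2 * a + b) * x + (-a - b - c - 1)) := by
  linear_combination (-(x-1)^4) * h1 + (-(x-1)^2) * h2 + h3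

lemma Padic.valuation_pow' {x : ℚ_[p]} (hx : x ≠ 0) (n : ℕ) :
    (x ^ n).valuation = n * x.valuation := by
  induction n with
  | zero => simp [Padic.valuation_one]
  | succ n ih =>
    rw [pow_succ, Padic.valuation_mul (pow_ne_zero n hx) hx, ih]
    push_cast; ring

lemma Padic.valuation_neg' (x : ℚ_[p]) : (-x).valuation = x.valuation := by
  rcases eq_or_ne x 0 with rfl | hx
  · simp
  have hm1 : ((-1 : ℚ_[p])).valuation = 0 := by
    have := Padic.valuation_intCast (p := p) (-1)
    simpa [padicValInt] using this
  rw [neg_eq_neg_one_mul, Padic.valuation_mul (by norm_num) hx, hm1, zero_add]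

lemma B_no_root (k : ℕ) (hk : 0 < k) (h3k : ¬ (3 ∣ k)) (r : ℚ_[p]) :
    ((X ^ 2 - C 2 * X + C 4) ^ 3 + C ((p : ℚ_[p]) ^ k)).eval r ≠ 0 := by
  have hp : p.Prime := Fact.out
  have hpne : (p : ℚ_[p]) ≠ 0 := by exact_mod_cast hp.ne_zero
  intro h
  set s : ℚ_[p] := r ^ 2 - 2 * r + 4 with hs
  have hcube : s ^ 3 = -((p : ℚ_[p]) ^ k) := by
    have : s ^ 3 + (p : ℚ_[p]) ^ k = 0 := by
      simpa [hs] using h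
    linear_combination this
  have hsne : s ≠ 0 := by
    intro h0
    rw [h0, zero_pow (by norm_num : (3:ℕ) ≠ 0)] at hcube
    exact pow_ne_zero k hpne (neg_eq_zero.mp hcube.symm)
  have hv : ((3 : ℕ) : ℤ) * s.valuation = (k : ℤ) := by
    have h1 : (s ^ 3).valuation = 3 * s.valuation := Padic.valuation_pow' hsne 3
    have h2 : ((-((p : ℚ_[p]) ^ k))).valuation = k := by
      rw [Padic.valuation_neg', Padic.valuation_pow' hpne k, Padic.valuation_p]
      ring
    rw [← h2, ← hcube, h1]; push_cast; ring
  have : (3 : ℤ) ∣ (k : ℤ) := ⟨s.valuation, by exact_mod_cast hv.symm⟩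
  exact h3k (by exact_mod_cast this)

lemma irreducible_of_cubic_factor {g h : Polynomial ℚ_[p]} (hg : g.Monic)
    (hdeg : g.natDegree = 3) (hno : ∀ r : ℚ_[p], (g * h).eval r ≠ 0) : Irreducible g := by
  rw [hg.irreducible_iff_natDegree']
  constructor
  · intro h1
    rw [h1] at hdeg
    simp at hdeg
  · rintro f q hf hq rfl hmem
    rw [hdeg] at hmem
    rw [Finset.mem_Ioc] at hmem
    have hq1 : q.natDegree = 1 := by omega
    have hqX := hq.eq_X_add_C hq1
    apply hno (-(q.coeff 0))
    have hqe : q.eval (-(q.coeff 0)) = 0 := by rw [hqX]; simp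
    rw [eval_mul, eval_mul, hqe, mul_zero, zero_mul]

lemma definesTR (k : ℕ) (hk : 0 < k) (h3k : ¬ (3 ∣ k)) {g h : Polynomial ℚ_[p]}
    (hmon : g.Monic) (hirr : Irreducible g) (hdeg : g.natDegree = 3)
    (hfac : (X ^ 2 - C 2 * X + C 4) ^ 3 + C ((p : ℚ_[p]) ^ k) = g * h) :
    DefinesTotallyRamifiedExt p g 3 := by
  have hp : p.Prime := Fact.out
  have hpne : (p : ℚ_[p]) ≠ 0 := by exact_mod_cast hp.ne_zero
  intro L _ _ θ hθ htop
  have hint : IsIntegral ℚ_[p] θ := ⟨g, hmon, by rwa [← aeval_def]⟩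
  have hmin : minpoly ℚ_[p] θ = g := (minpoly.eq_of_irreducible_of_monic hirr hθ hmon).symm
  let pb : PowerBasis ℚ_[p] L :=
    (Algebra.adjoin.powerBasis hint).map ((Subalgebra.equivOfEq _ _ htop).trans Subalgebra.topEquiv)
  have hrank : Module.finrank ℚ_[p] L = 3 := by
    rw [pb.finrank]
    show (Algebra.adjoin.powerBasis hint).dim = 3
    rw [Algebra.adjoin.powerBasis_dim, hmin, hdeg]
  refine ⟨hrank, ?_⟩
  set s : L := θ ^ 2 - 2 * θ + 4 with hs
  have hBθ : Polynomial.aeval θ ((X ^ 2 - C 2 * X + C 4) ^ 3 + C ((p : ℚ_[p]) ^ k)) = 0 := by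
    rw [hfac, map_mul, hθ, zero_mul]
  have hseq : s ^ 3 = algebraMap ℚ_[p] L (-((p : ℚ_[p]) ^ k)) := by
    simp only [map_add, map_pow, map_sub, map_mul, aeval_X, aeval_C, map_ofNat] at hBθ
    rw [map_neg, map_pow]
    linear_combination hBθ
  have hmapne : algebraMap ℚ_[p] L (-((p : ℚ_[p]) ^ k)) ≠ 0 := by
    rw [← map_zero (algebraMap ℚ_[p] L)]
    exact fun hc => (neg_ne_zero.mpr (pow_ne_zero k hpne)) ((algebraMap ℚ_[p] L).injective hc)
  have hsne : s ≠ 0 := by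
    intro h0
    rw [h0, zero_pow (by norm_num : (3:ℕ) ≠ 0)] at hseq
    exact hmapne hseq.symm
  have hNs3 : (Algebra.norm ℚ_[p] s) ^ 3 = (-((p : ℚ_[p]) ^ k)) ^ 3 := by
    rw [← map_pow, hseq, Algebra.norm_algebraMap, hrank]
  have hNsne : Algebra.norm ℚ_[p] s ≠ 0 := by
    intro h0
    rw [h0, zero_pow (by norm_num : (3:ℕ) ≠ 0)] at hNs3
    exact pow_ne_zero 3 (neg_ne_zero.mpr (pow_ne_zero k hpne)) hNs3.symm
  have hvNs : (Algebra.norm ℚ_[p] s).valuation = (k : ℤ) := by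
    have h1 : ((Algebra.norm ℚ_[p] s) ^ 3).valuation = 3 * (Algebra.norm ℚ_[p] s).valuation := by
      have := Padic.valuation_pow' hNsne 3; push_cast at this ⊢; linarith [this]
    have h2 : ((-((p : ℚ_[p]) ^ k)) ^ 3).valuation = 3 * (k : ℤ) := by
      have hne : (-((p : ℚ_[p]) ^ k)) ≠ 0 := neg_ne_zero.mpr (pow_ne_zero k hpne)
      rw [Padic.valuation_pow' hne 3, Padic.valuation_neg', Padic.valuation_pow' hpne k,
        Padic.valuation_p]
      push_cast; ring
    have := congrArg Padic.valuation hNs3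
    rw [h1, h2] at this
    omega
  obtain ⟨a, m, ham⟩ : ∃ a m : ℕ, a * k = 3 * m + 1 := by
    have h2 : k % 3 = 1 ∨ k % 3 = 2 := by omega
    rcases h2 with h2 | h2
    · exact ⟨1, k / 3, by omega⟩
    · exact ⟨2, 2 * (k / 3) + 1, by omega⟩
  set d : L := algebraMap ℚ_[p] L ((p : ℚ_[p]) ^ m) with hd
  have hdne : d ≠ 0 := by
    rw [hd, ← map_zero (algebraMap ℚ_[p] L)]
    exact fun hc => (pow_ne_zero m hpne) ((algebraMap ℚ_[p] L).injective hc)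
  refine ⟨s ^ a / d, div_ne_zero (pow_ne_zero a hsne) hdne, ?_⟩
  have hxd : (s ^ a / d) * d = s ^ a := div_mul_cancel₀ _ hdne
  have hNxd : (Algebra.norm ℚ_[p] (s ^ a / d)) * (Algebra.norm ℚ_[p] d) =
      (Algebra.norm ℚ_[p] s) ^ a := by
    rw [← map_mul, hxd, map_pow]
  have hNd : Algebra.norm ℚ_[p] d = ((p : ℚ_[p]) ^ m) ^ 3 := by
    rw [hd, Algebra.norm_algebraMap, hrank]
  have hNdne : Algebra.norm ℚ_[p] d ≠ 0 := by
    rw [hNd]; exact pow_ne_zero 3 (pow_ne_zero m hpne)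
  have hNxne : Algebra.norm ℚ_[p] (s ^ a / d) ≠ 0 := by
    intro h0
    rw [h0, zero_mul] at hNxd
    exact pow_ne_zero a hNsne hNxd.symm
  have hvd : (Algebra.norm ℚ_[p] d).valuation = 3 * (m : ℤ) := by
    rw [hNd, Padic.valuation_pow' (pow_ne_zero m hpne) 3, Padic.valuation_pow' hpne m,
      Padic.valuation_p]
    push_cast; ring
  have hsum := congrArg Padic.valuation hNxd
  rw [Padic.valuation_mul hNxne hNdne, hvd, Padic.valuation_pow' hNsne a, hvNs] at hsum
  have : (a : ℤ) * k = 3 * m + 1 := by exact_mod_cast ham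
  omega

end BFactorsAux

open BFactorsAux PadicInt

/-- for a prime `p ≡ 1 (mod 3)` and `k > 0` with `3 ∤ k`, the polynomial
`B(x) = (x² - 2x + 4)³ + p^k` is the product of exactly two distinct monic irreducible
cubic polynomials over `ℚ_p`, each defining a totally ramified cubic extension of `ℚ_p`
(with residue degree 1). -/
theorem B_factors_two_ramified_cubics (p k : ℕ) [Fact p.Prime] (hpmod : p % 3 = 1)
    (hk : 0 < k) (h3k : ¬ (3 ∣ k)) :
    ∃ g h : Polynomial ℚ_[p],
      (X ^ 2 - C 2 * X + C 4) ^ 3 + C ((p : ℚ_[p]) ^ k) = g * h ∧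
      g ≠ h ∧ g.Monic ∧ h.Monic ∧ Irreducible g ∧ Irreducible h ∧
      g.natDegree = 3 ∧ h.natDegree = 3 ∧
      DefinesTotallyRamifiedExt p g 3 ∧ DefinesTotallyRamifiedExt p h 3 := by
  have hp : p.Prime := Fact.out
  have h2 := zmod_two_ne hpmod
  have h3 := zmod_three_ne hpmod
  have h192 : (192 : ZMod p) ≠ 0 := by
    have : (192 : ZMod p) = 2 ^ 6 * 3 := by norm_num
    rw [this]
    exact mul_ne_zero (pow_ne_zero 6 h2) h3
  obtain ⟨t, ht, htne⟩ := exists_sqrt_neg_three hpmod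
  -- Hensel lift for c with c² = -(27 + p^k)
  have hc0 : (((X ^ 2 + C (27 + (p : ℤ_[p]) ^ k))).map (toZMod : ℤ_[p] →+* ZMod p)).eval (3 * t) = 0 := by
    simp only [Polynomial.map_add, Polynomial.map_pow, Polynomial.map_X, map_C,
      map_add, map_pow, map_natCast, map_ofNat, Polynomial.map_natCast, Polynomial.map_ofNat,
      eval_add, eval_pow, eval_X, eval_C, eval_natCast, eval_ofNat,
      ZMod.natCast_self, zero_pow hk.ne', add_zero]
    linear_combination 9 * ht
  have hc1 : (((X ^ 2 + C (27 + (p : ℤ_[p]) ^ k))).derivative.map (toZMod : ℤ_[p] →+* ZMod p)).eval (3 * t) ≠ 0 := by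
    simp only [derivative_add, derivative_X_pow, derivative_C, add_zero,
      Polynomial.map_mul, Polynomial.map_pow, Polynomial.map_X, Polynomial.map_natCast,
      Polynomial.map_ofNat, map_C, eval_mul, eval_pow, eval_X, eval_C, eval_natCast,
      eval_ofNat, map_natCast, map_ofNat, Nat.cast_ofNat]
    intro hcontra
    rcases mul_eq_zero.mp hcontra with h' | h'
    · exact h2 (by exact_mod_cast h')
    · rw [pow_one] at h'
      exact mul_ne_zero h3 htne h'
  obtain ⟨c, hc, hct⟩ := hensel_lift (X ^ 2 + C (27 + (p : ℤ_[p]) ^ k)) (3 * t) hc0 hc1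
  -- Hensel lift for A
  have hA0 : (((X ^ 4 + 18 * X ^ 2 - C (8 * c) * X - 27 : Polynomial ℤ_[p])).map (toZMod : ℤ_[p] →+* ZMod p)).eval (-(3 * t)) = 0 := by
    simp only [Polynomial.map_add, Polynomial.map_sub, Polynomial.map_mul, Polynomial.map_pow,
      Polynomial.map_X, map_C, map_mul, map_ofNat, Polynomial.map_ofNat, hct,
      eval_add, eval_sub, eval_mul, eval_pow, eval_X, eval_C, eval_ofNat]
    linear_combination (81 * t ^ 2 - 9) * ht
  have hA1 : (((X ^ 4 + 18 * X ^ 2 - C (8 * c) * X - 27 : Polynomial ℤ_[p])).derivative.map (toZMod : ℤ_[p] →+* ZMod p)).eval (-(3 * t)) ≠ 0 := by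
    simp only [derivative_add, derivative_sub, derivative_mul, derivative_X_pow, derivative_C,
      derivative_X, derivative_ofNat, Polynomial.map_add, Polynomial.map_sub, Polynomial.map_mul,
      Polynomial.map_pow, Polynomial.map_X, map_C, map_mul, map_ofNat, Polynomial.map_ofNat, hct,
      map_natCast, Nat.cast_ofNat, eval_add, eval_sub, eval_mul, eval_pow, eval_X, eval_C,
      eval_natCast, eval_ofNat, zero_mul, add_zero, zero_add, mul_one, mul_zero, sub_zero]
    intro hcontra
    apply h192
    have h192t : (192 : ZMod p) * t = 0 := by linear_combination hcontra + (108 * t) * ht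
    rcases mul_eq_zero.mp h192t with h' | h'
    · exact h'
    · exact absurd h' htne
  obtain ⟨A, hA, hAt⟩ := hensel_lift (X ^ 4 + 18 * X ^ 2 - C (8 * c) * X - 27) (-(3 * t)) hA0 hA1
  -- pass to ℚ_[p]
  have hcQ : eval c (X ^ 2 + C (27 + (p : ℤ_[p]) ^ k)) = c ^ 2 + (27 + (p : ℤ_[p]) ^ k) := by
    simp only [eval_add, eval_pow, eval_X, eval_C]
  rw [hcQ] at hc
  have hAQ : eval A (X ^ 4 + 18 * X ^ 2 - C (8 * c) * X - 27) =
      A ^ 4 + 18 * A ^ 2 - 8 * c * A - 27 := by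
    simp only [eval_add, eval_sub, eval_mul, eval_pow, eval_X, eval_C, eval_ofNat]
  rw [hAQ] at hA
  have h27c : ((27 : ℤ_[p]) : ℚ_[p]) = 27 := by norm_cast
  have h18c : ((18 : ℤ_[p]) : ℚ_[p]) = 18 := by norm_cast
  have h8c : ((8 : ℤ_[p]) : ℚ_[p]) = 8 := by norm_cast
  set α : ℚ_[p] := (A : ℚ_[p]) with hα
  set γ : ℚ_[p] := (c : ℚ_[p]) with hγ
  have hγQ : γ ^ 2 = -(27 + (p : ℚ_[p]) ^ k) := by
    have := congrArg (fun x : ℤ_[p] => (x : ℚ_[p])) hc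
    push_cast at this
    rw [h27c] at this
    linear_combination this
  have hαQ : α ^ 4 + 18 * α ^ 2 - 8 * γ * α - 27 = 0 := by
    have := congrArg (fun x : ℤ_[p] => (x : ℚ_[p])) hA
    push_cast at this
    rw [h27c, h18c, h8c] at this
    linear_combination this
  set β : ℚ_[p] := (9 + α ^ 2) / 2 with hβ
  have h1 : 2 * β = 9 + α ^ 2 := by rw [hβ]; field_simp
  have h2' : β ^ 2 - 2 * α * γ = 27 := by
    rw [hβ]
    field_simp
    linear_combination hαQ
  -- the two cubic factors
  set g : Polynomial ℚ_[p] :=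
    X ^ 3 + (C α - 3) * X ^ 2 + (3 - 2 * C α + C β) * X + (C α - C β + C γ - 1) with hgdef
  set h : Polynomial ℚ_[p] :=
    X ^ 3 + (-C α - 3) * X ^ 2 + (3 + 2 * C α + C β) * X + (-C α - C β - C γ - 1) with hhdef
  have hC1 : 2 * C β = 9 + (C α) ^ 2 := by
    rw [show ((2:Polynomial ℚ_[p])) = C 2 from (map_ofNat C 2).symm,
      show ((9:Polynomial ℚ_[p])) = C 9 from (map_ofNat C 9).symm, ← C_pow, ← C_mul, ← C_add]
    exact congrArg C h1
  have hC2 : (C β) ^ 2 - 2 * C α * C γ = 27 := by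
    rw [show ((2:Polynomial ℚ_[p])) = C 2 from (map_ofNat C 2).symm,
      show ((27:Polynomial ℚ_[p])) = C 27 from (map_ofNat C 27).symm,
      ← C_pow, ← C_mul, ← C_mul, ← C_sub]
    exact congrArg C h2'
  have hC3 : (C γ) ^ 2 = -(27 + C ((p : ℚ_[p]) ^ k)) := by
    rw [show ((27:Polynomial ℚ_[p])) = C 27 from (map_ofNat C 27).symm,
      ← C_pow, ← C_add, ← C_neg]
    exact congrArg C hγQ
  have hfac : (X ^ 2 - C 2 * X + C 4) ^ 3 + C ((p : ℚ_[p]) ^ k) = g * h := by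
    have hid := factor_identity (R := Polynomial ℚ_[p]) X (C α) (C β) (C γ)
      (C ((p : ℚ_[p]) ^ k)) hC1 hC2 hC3
    rw [show (C (2:ℚ_[p])) = (2 : Polynomial ℚ_[p]) from map_ofNat C 2,
      show (C (4:ℚ_[p])) = (4 : Polynomial ℚ_[p]) from map_ofNat C 4]
    rw [hgdef, hhdef]
    exact hid
  -- properties
  have hgmon : g.Monic := by rw [hgdef]; monicity!
  have hhmon : h.Monic := by rw [hhdef]; monicity!
  have hgdeg : g.natDegree = 3 := by rw [hgdef]; compute_degree!
  have hhdeg : h.natDegree = 3 := by rw [hhdef]; compute_degree!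
  have hno : ∀ r : ℚ_[p], (g * h).eval r ≠ 0 := by
    intro r hr
    exact B_no_root k hk h3k r (by rw [hfac]; exact hr)
  have hno' : ∀ r : ℚ_[p], (h * g).eval r ≠ 0 := by
    intro r
    rw [mul_comm]
    exact hno r
  have hγne : γ ≠ 0 := by
    intro h0
    rw [h0] at hγQ
    have h27 : (27 : ℚ_[p]) + (p : ℚ_[p]) ^ k = 0 := by linear_combination hγQ
    -- 27 + p^k ≠ 0 since it is a unit in ℤ_[p]
    have hz : ((27 + (p : ℤ_[p]) ^ k : ℤ_[p]) : ℚ_[p]) = 0 := by push_cast; rw [h27c]; linear_combination h27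
    have : (27 + (p : ℤ_[p]) ^ k : ℤ_[p]) = 0 := PadicInt.coe_eq_zero.mp hz
    have := congrArg (toZMod : ℤ_[p] →+* ZMod p) this
    simp only [map_add, map_pow, map_natCast, map_ofNat, ZMod.natCast_self,
      zero_pow hk.ne', add_zero, map_zero] at this
    have h27z : (27 : ZMod p) = 3 ^ 3 := by norm_num
    rw [h27z] at this
    exact pow_ne_zero 3 h3 this
  have hgh : g ≠ h := by
    intro hEq
    have he1 : g.eval 1 = γ := by rw [hgdef]; simp; ring
    have he2 : h.eval 1 = -γ := by rw [hhdef]; simp; ring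
    rw [hEq, he2] at he1
    exact hγne (by linear_combination -he1 / 2)
  have hgirr : Irreducible g := irreducible_of_cubic_factor hgmon hgdeg hno
  have hhirr : Irreducible h := irreducible_of_cubic_factor hhmon hhdeg hno'
  exact ⟨g, h, hfac, hgh, hgmon, hhmon, hgirr, hhirr, hgdeg, hhdeg,
    definesTR k hk h3k hgmon hgirr hgdeg hfac,
    definesTR k hk h3k hhmon hhirr hhdeg (by rw [hfac, mul_comm])⟩
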